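/- Let G be a finite graph on vertex set V over a field F. If there is a matrix A ∈ F^{V×V} of rank r representing the complement of G (i.e., A_{u,u} ≠ 0 for all u, and A_{u,v} = 0 whenever u ≠ v and uv is an edge of G), then there exists an independent representation of G over F^r. -/

import Mathlib

open Matrix

/-- If a matrix `A` of rank `r` represents the complement of a finite graph `G`
over a field `F` (nonzero diagonal, and `A u v = 0` for every edge `uv` of `G`), then `G` has
an independent representation over `F^r`. -/
theorem indep_rep_of_matrix {V : Type*} [Fintype V] [DecidableEq V] (G : SimpleGraph V)
    (F : Type*) [Field F] (A : Matrix V V F) (r : ℕ) (hrk : A.rank = r)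
    (hdiag : ∀ u, A u u ≠ 0)
    (hedge : ∀ u v, G.Adj u v → A u v = 0) :
    ∃ x : V → (Fin r → F),
      ∀ v, x v ∉ Submodule.span F (x '' (G.neighborSet v)) := by
  classical
  set W : Submodule F (V → F) := Submodule.span F (Set.range Aᵀ) with hW
  have hfin : Module.finrank F W = r := by
    rw [← hrk, Matrix.rank_eq_finrank_span_cols]
    rfl
  let b := Module.finBasisOfFinrankEq F W hfin
  let e : W ≃ₗ[F] (Fin r → F) := b.equivFun
  have hmem : ∀ v, Aᵀ v ∈ W := fun v => Submodule.subset_span (Set.mem_range_self v)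
  refine ⟨fun v => e ⟨Aᵀ v, hmem v⟩, fun v hv => ?_⟩
  -- push forward along W.subtype ∘ e.symm
  let f : (Fin r → F) →ₗ[F] (V → F) := W.subtype.comp (e.symm : (Fin r → F) →ₗ[F] W)
  have hfx : ∀ u, f (e ⟨Aᵀ u, hmem u⟩) = Aᵀ u := by
    intro u
    simp [f, LinearEquiv.symm_apply_apply]
  have h1 : f (e ⟨Aᵀ v, hmem v⟩) ∈ Submodule.span F (f '' ((fun u => e ⟨Aᵀ u, hmem u⟩) '' (G.neighborSet v))) :=
    Submodule.apply_mem_span_image_of_mem_span f hv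
  rw [hfx, Set.image_image] at h1
  have himg : (fun u => f (e ⟨Aᵀ u, hmem u⟩)) '' (G.neighborSet v) = Aᵀ '' (G.neighborSet v) := by
    apply Set.image_congr
    intro u _
    exact hfx u
  rw [himg] at h1
  -- evaluate at v
  have hle : Submodule.span F (Aᵀ '' (G.neighborSet v)) ≤ LinearMap.ker (LinearMap.proj v : (V → F) →ₗ[F] F) := by
    rw [Submodule.span_le]
    rintro _ ⟨u, hu, rfl⟩
    simp only [SetLike.mem_coe, LinearMap.mem_ker, LinearMap.proj_apply]
    exact hedge v u ((G.mem_neighborSet v u).mp hu)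
  have := hle h1
  simp only [LinearMap.mem_ker, LinearMap.proj_apply] at this
  exact hdiag v this
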